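/- Let f = Σ_{i=1}^m f_i with each ∇f_i being L_i-Lipschitz, L = Σ L_i. Let g be convex, γ > 0, v ∈ ℝⁿ, x⁺ = prox_{γg}(x − γv), and let x̄ be any minimizer of F = f + g. Suppose the delayed points satisfy ‖x⁺ − x^{k−τ_i}‖ ≤ Σ_{d=k−τ}^{k} ‖Δ^d‖ for each i, where Δ^k = x⁺ − x. Then F(x⁺) − F(x̄) ≤ L·(Σ_{d=k−τ}^{k} ‖Δ^d‖)·‖x⁺ − x̄‖ + (1/γ)‖Δ^k‖·‖x⁺ − x̄‖ + ⟨Σ_i ∇f_i(x^{k−τ_i}) − v, x⁺ − x̄⟩, assuming f is convex. -/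

import Mathlib

open scoped RealInnerProductSpace BigOperators

lemma grad_conv_ineq {E : Type*} [NormedAddCommGroup E] [InnerProductSpace ℝ E]
    [CompleteSpace E] {F : E → ℝ} {G x y : E}
    (hc : ConvexOn ℝ Set.univ F) (h : HasGradientAt F G x) :
    F x + ⟪G, y - x⟫ ≤ F y := by
  set φ : ℝ → ℝ := fun t => F (AffineMap.lineMap x y t) with hφ
  have hconv : ConvexOn ℝ Set.univ φ := by
    have := hc.comp_affineMap (AffineMap.lineMap x y : ℝ →ᵃ[ℝ] E)
    exact this
  have hline : HasDerivAt (fun t : ℝ => AffineMap.lineMap x y t) (y - x) 0 := by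
    have : HasDerivAt (fun t : ℝ => t • (y - x) + x) ((1 : ℝ) • (y - x)) 0 :=
      ((hasDerivAt_id 0).smul_const (y - x)).add_const x
    simpa [AffineMap.lineMap_apply, one_smul] using this
  have hder : HasDerivAt φ ⟪G, y - x⟫ 0 := by
    have hF : HasFDerivAt F (InnerProductSpace.toDual ℝ E G) (AffineMap.lineMap x y (0:ℝ)) := by
      simpa [AffineMap.lineMap_apply] using h.hasFDerivAt
    have h3 := hF.comp_hasDerivAt 0 hline
    simp only [InnerProductSpace.toDual_apply_apply] at h3
    exact h3
  have := hconv.le_slope_of_hasDerivAt (Set.mem_univ 0) (Set.mem_univ 1) one_pos hder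
  have h01 : slope φ 0 1 = F y - F x := by
    simp [slope_def_field, hφ, AffineMap.lineMap_apply]
  rw [h01] at this
  linarith

lemma prox_subgrad {E : Type*} [NormedAddCommGroup E] [InnerProductSpace ℝ E]
    {g : E → ℝ} (hg : ConvexOn ℝ Set.univ g) {γ : ℝ} (hγ : 0 < γ) {w p : E}
    (hp : ∀ y : E, (1/2) * ‖w - p‖ ^ 2 + γ * g p ≤ (1/2) * ‖w - y‖ ^ 2 + γ * g y)
    (y : E) : ⟪w - p, y - p⟫ ≤ γ * (g y - g p) := by
  have key : ∀ t : ℝ, 0 < t → t ≤ 1 →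
      ⟪w - p, y - p⟫ ≤ γ * (g y - g p) + t * (‖y - p‖ ^ 2 / 2) := by
    intro t ht ht1
    have h1 := hp (p + t • (y - p))
    have hgc : g (p + t • (y - p)) ≤ (1 - t) * g p + t * g y := by
      have := hg.2 (Set.mem_univ p) (Set.mem_univ y) (by linarith : (0:ℝ) ≤ 1 - t)
        (le_of_lt ht) (by ring)
      calc g (p + t • (y - p)) = g ((1-t) • p + t • y) := by
            congr 1
            rw [smul_sub]; module
        _ ≤ (1 - t) * g p + t * g y := this
    have hexp : ‖w - (p + t • (y - p))‖ ^ 2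
        = ‖w - p‖ ^ 2 - 2 * t * ⟪w - p, y - p⟫ + t ^ 2 * ‖y - p‖ ^ 2 := by
      have : w - (p + t • (y - p)) = (w - p) - t • (y - p) := by abel
      rw [this, norm_sub_sq_real, real_inner_smul_right, norm_smul]
      simp [mul_pow, abs_of_pos ht]
      ring
    rw [hexp] at h1
    have h2 : t * ⟪w - p, y - p⟫ ≤ t * γ * (g y - g p) + t^2 * (‖y - p‖ ^ 2 / 2) := by
      nlinarith [h1, hgc, hγ]
    have := (mul_le_mul_iff_right₀ ht).mp (by nlinarith [h2] : t * ⟪w - p, y - p⟫ ≤ t * (γ * (g y - g p) + t * (‖y - p‖ ^ 2 / 2)))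
    nlinarith [this, mul_pos ht ht, sq_nonneg ‖y - p‖, ht1, ht]
  refine le_of_forall_pos_le_add ?_
  intro ε hε
  set c := ‖y - p‖ ^ 2 / 2 with hc
  have hc0 : 0 ≤ c := by positivity
  set t := min 1 (ε / (c + 1)) with htd
  have ht0 : 0 < t := lt_min one_pos (by positivity)
  have ht1 : t ≤ 1 := min_le_left _ _
  have h := key t ht0 ht1
  have : t * c ≤ ε := by
    have h1 : t ≤ ε / (c + 1) := min_le_right _ _
    have : t * c ≤ (ε / (c + 1)) * c := by nlinarith
    calc t * c ≤ (ε / (c + 1)) * c := this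
      _ ≤ ε := by rw [div_mul_eq_mul_div, div_le_iff₀ (by linarith)]; nlinarith
  linarith

theorem stmt_13 (n m : ℕ) (f : Fin m → EuclideanSpace ℝ (Fin n) → ℝ)
    (gf : Fin m → EuclideanSpace ℝ (Fin n) → EuclideanSpace ℝ (Fin n))
    (hgrad : ∀ i z, HasGradientAt (f i) (gf i z) z)
    (L : Fin m → ℝ) (hL : ∀ i, 0 < L i)
    (hlip : ∀ i, ∀ a b : EuclideanSpace ℝ (Fin n), ‖gf i a - gf i b‖ ≤ L i * ‖a - b‖)
    (hfconv : ConvexOn ℝ Set.univ (fun z => ∑ i, f i z))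
    (g : EuclideanSpace ℝ (Fin n) → ℝ) (hgconv : ConvexOn ℝ Set.univ g)
    (γ : ℝ) (hγ : 0 < γ) (v : EuclideanSpace ℝ (Fin n))
    (x : ℤ → EuclideanSpace ℝ (Fin n)) (k : ℤ) (τ : ℕ) (τi : Fin m → ℕ)
    (hprox : ∀ y : EuclideanSpace ℝ (Fin n),
      (1 / 2) * ‖x k - γ • v - x (k + 1)‖ ^ 2 + γ * g (x (k + 1)) ≤
        (1 / 2) * ‖x k - γ • v - y‖ ^ 2 + γ * g y)
    (xbar : EuclideanSpace ℝ (Fin n))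
    (hmin : ∀ y : EuclideanSpace ℝ (Fin n), (∑ i, f i xbar) + g xbar ≤ (∑ i, f i y) + g y)
    (hdel : ∀ i, ‖x (k + 1) - x (k - (τi i : ℤ))‖ ≤
      ∑ d ∈ Finset.Icc (k - (τ : ℤ)) k, ‖x (d + 1) - x d‖) :
    ((∑ i, f i (x (k + 1))) + g (x (k + 1))) - ((∑ i, f i xbar) + g xbar) ≤
      (∑ i, L i) * (∑ d ∈ Finset.Icc (k - (τ : ℤ)) k, ‖x (d + 1) - x d‖) * ‖x (k + 1) - xbar‖
      + (1 / γ) * ‖x (k + 1) - x k‖ * ‖x (k + 1) - xbar‖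
      + ⟪(∑ i, gf i (x (k - (τi i : ℤ)))) - v, x (k + 1) - xbar⟫ := by
  set p : EuclideanSpace ℝ (Fin n) := x (k + 1) with hpdef
  set e : EuclideanSpace ℝ (Fin n) := p - xbar with he
  set Δ : ℝ := ∑ d ∈ Finset.Icc (k - (τ : ℤ)) k, ‖x (d + 1) - x d‖ with hΔ
  have hΔ0 : 0 ≤ Δ := Finset.sum_nonneg fun _ _ => norm_nonneg _
  have he0 : (0:ℝ) ≤ ‖e‖ := norm_nonneg _
  -- gradient of the sum at p
  have hsumgrad : HasGradientAt (fun z => ∑ i, f i z) (∑ i, gf i p) p := by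
    have h1 : HasFDerivAt (fun z => ∑ i, f i z)
        (∑ i, InnerProductSpace.toDual ℝ (EuclideanSpace ℝ (Fin n)) (gf i p)) p :=
      HasFDerivAt.fun_sum (fun i _ => (hgrad i p).hasFDerivAt)
    have h2 : (InnerProductSpace.toDual ℝ (EuclideanSpace ℝ (Fin n))) (∑ i, gf i p)
        = ∑ i, InnerProductSpace.toDual ℝ (EuclideanSpace ℝ (Fin n)) (gf i p) := map_sum _ _ _
    unfold HasGradientAt HasGradientAtFilter
    rw [h2]
    exact h1
  -- f part
  have hf1 : (∑ i, f i p) - (∑ i, f i xbar) ≤ ⟪∑ i, gf i p, e⟫ := by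
    have := grad_conv_ineq hfconv hsumgrad (y := xbar)
    have hsym : ⟪∑ i, gf i p, xbar - p⟫ = - ⟪∑ i, gf i p, e⟫ := by
      rw [he, ← inner_neg_right]; congr 1; abel
    rw [hsym] at this
    linarith
  -- split the inner product
  have hsplit : ⟪∑ i, gf i p, e⟫
      = (∑ i, ⟪gf i p - gf i (x (k - (τi i : ℤ))), e⟫)
        + ⟪∑ i, gf i (x (k - (τi i : ℤ))), e⟫ := by
    rw [sum_inner, sum_inner, ← Finset.sum_add_distrib]
    exact Finset.sum_congr rfl fun i _ => by rw [inner_sub_left]; ring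
  -- bound each Lipschitz term
  have hterm : ∀ i : Fin m, ⟪gf i p - gf i (x (k - (τi i : ℤ))), e⟫ ≤ L i * Δ * ‖e‖ := by
    intro i
    calc ⟪gf i p - gf i (x (k - (τi i : ℤ))), e⟫
        ≤ ‖gf i p - gf i (x (k - (τi i : ℤ)))‖ * ‖e‖ := real_inner_le_norm _ _
      _ ≤ (L i * ‖p - x (k - (τi i : ℤ))‖) * ‖e‖ := by
          apply mul_le_mul_of_nonneg_right (hlip i _ _) he0
      _ ≤ (L i * Δ) * ‖e‖ := by
          apply mul_le_mul_of_nonneg_right _ he0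
          exact mul_le_mul_of_nonneg_left (hdel i) (hL i).le
  have hsumterm : (∑ i, ⟪gf i p - gf i (x (k - (τi i : ℤ))), e⟫)
      ≤ (∑ i, L i) * Δ * ‖e‖ := by
    calc (∑ i, ⟪gf i p - gf i (x (k - (τi i : ℤ))), e⟫)
        ≤ ∑ i, L i * Δ * ‖e‖ := Finset.sum_le_sum fun i _ => hterm i
      _ = (∑ i, L i) * Δ * ‖e‖ := by rw [← Finset.sum_mul, ← Finset.sum_mul]
  -- g part
  have hg1 : ⟪x k - γ • v - p, xbar - p⟫ ≤ γ * (g xbar - g p) :=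
    prox_subgrad hgconv hγ hprox xbar
  have hg2 : g p - g xbar ≤ (1/γ) * ⟪x k - γ • v - p, e⟫ := by
    have hsym : ⟪x k - γ • v - p, xbar - p⟫ = - ⟪x k - γ • v - p, e⟫ := by
      rw [he, ← inner_neg_right]; congr 1; abel
    rw [hsym] at hg1
    rw [div_mul_eq_mul_div, le_div_iff₀ hγ]
    nlinarith
  have hg3 : ⟪x k - γ • v - p, e⟫ = ⟪x k - p, e⟫ - γ * ⟪v, e⟫ := by
    have : x k - γ • v - p = (x k - p) - γ • v := by abel
    rw [this, inner_sub_left, real_inner_smul_left]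
  have hg4 : ⟪x k - p, e⟫ ≤ ‖p - x k‖ * ‖e‖ := by
    calc ⟪x k - p, e⟫ ≤ ‖x k - p‖ * ‖e‖ := real_inner_le_norm _ _
      _ = ‖p - x k‖ * ‖e‖ := by rw [norm_sub_rev]
  have hg5 : g p - g xbar ≤ (1/γ) * ‖p - x k‖ * ‖e‖ - ⟪v, e⟫ := by
    rw [hg3] at hg2
    have h1γ : 0 < 1/γ := by positivity
    have := hg2
    have hmul : (1/γ) * (⟪x k - p, e⟫ - γ * ⟪v, e⟫)
        = (1/γ) * ⟪x k - p, e⟫ - ⟪v, e⟫ := by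
      field_simp
    rw [hmul] at this
    have h2 : (1/γ) * ⟪x k - p, e⟫ ≤ (1/γ) * (‖p - x k‖ * ‖e‖) :=
      mul_le_mul_of_nonneg_left hg4 h1γ.le
    linarith [this, h2]
  -- final inner product identity
  have hfin : ⟪(∑ i, gf i (x (k - (τi i : ℤ)))) - v, e⟫
      = ⟪∑ i, gf i (x (k - (τi i : ℤ))), e⟫ - ⟪v, e⟫ := inner_sub_left _ _ _
  have goal := calc
    ((∑ i, f i p) + g p) - ((∑ i, f i xbar) + g xbar)
        = ((∑ i, f i p) - (∑ i, f i xbar)) + (g p - g xbar) := by ring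
    _ ≤ ⟪∑ i, gf i p, e⟫ + ((1/γ) * ‖p - x k‖ * ‖e‖ - ⟪v, e⟫) := add_le_add hf1 hg5
    _ = (∑ i, ⟪gf i p - gf i (x (k - (τi i : ℤ))), e⟫)
        + ⟪∑ i, gf i (x (k - (τi i : ℤ))), e⟫
        + ((1/γ) * ‖p - x k‖ * ‖e‖ - ⟪v, e⟫) := by rw [hsplit]
    _ ≤ (∑ i, L i) * Δ * ‖e‖ + ⟪∑ i, gf i (x (k - (τi i : ℤ))), e⟫
        + ((1/γ) * ‖p - x k‖ * ‖e‖ - ⟪v, e⟫) := by linarith [hsumterm]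
    _ = (∑ i, L i) * Δ * ‖e‖ + (1/γ) * ‖p - x k‖ * ‖e‖
        + ⟪(∑ i, gf i (x (k - (τi i : ℤ)))) - v, e⟫ := by rw [hfin]; ring
  exact goal
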